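/- Let 𝒜 = Σ_{n≥0} a_n X^n ∈ ℚ[[X]] be the generating formal power series of the Apéry numbers a_n = Σ_{k=0}^n (n choose k)²((n+k) choose k)². Then, with ' denoting the formal derivative of formal power series, X²(1 − 34X + X²)·𝒜''' + X(3 − 153X + 6X²)·𝒜'' + (1 − 112X + 7X²)·𝒜' + (X − 5)·𝒜 = 0 in ℚ[[X]]. -/

import Mathlib

open PowerSeries

/-- The Apéry numbers `aₙ = Σ_{k=0}^n (n choose k)² ((n+k) choose k)²`. -/
def apery (n : ℕ) : ℚ :=
  ∑ k ∈ Finset.range (n + 1), ((n.choose k : ℚ)) ^ 2 * (((n + k).choose k : ℚ)) ^ 2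

/-- The generating series `𝒜 = Σ aₙ Xⁿ` of the Apéry numbers. -/
noncomputable def aperyGF : PowerSeries ℚ := PowerSeries.mk apery

/-- Summand of the Apéry numbers. -/
def FF (n k : ℕ) : ℚ := ((n.choose k : ℚ)) ^ 2 * (((n + k).choose k : ℚ)) ^ 2

/-- Zeilberger certificate polynomial. -/
def QQ (n k : ℚ) : ℚ := 4*(2*n+1)*(2*k^2-3*k-4*n^2-4*n)

/-- Zeilberger certificate sequence. -/
def GG (n : ℕ) : ℕ → ℚ
  | 0 => 0
  | (k+1) => QQ n (k+1) * ((n.choose k : ℚ))^2 * (((n+k).choose k : ℚ))^2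

theorem keyid (n k : ℕ) :
    ((n:ℚ)+2)^3 * FF (n+2) k
      - (34*((n:ℚ)+1)^3 + 51*((n:ℚ)+1)^2 + 27*((n:ℚ)+1) + 5) * FF (n+1) k
      + ((n:ℚ)+1)^3 * FF n k
    = GG (n+1) (k+1) - GG (n+1) k := by
  rcases Nat.lt_or_ge k (n+1) with h | h
  · rcases k with _ | j
    · simp [FF, GG, QQ]; ring
    · obtain ⟨m, rfl⟩ : ∃ m, n = j+1+m := ⟨n-(j+1), by omega⟩
      have h1 : ((j:ℚ)+m+2) ≠ 0 := by positivity
      have h2 : ((m:ℚ)+2) ≠ 0 := by positivity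
      have h3 : (2*(j:ℚ)+m+3) ≠ 0 := by positivity
      have h4 : ((j:ℚ)+m+3) ≠ 0 := by positivity
      have N1 := Nat.choose_mul_succ_eq (j+1+m) (j+1)
      rw [show j+1+m+1 - (j+1) = m+1 from by omega] at N1
      have hA0 : (((j+1+m).choose (j+1) : ℚ)) = ((j+1+m+1).choose (j+1) : ℚ) * (m+1) / ((j:ℚ)+m+2) := by
        rw [eq_div_iff h1]; have C1 := congrArg (Nat.cast (R := ℚ)) N1; push_cast at C1; linear_combination C1
      have N2 := Nat.choose_mul_succ_eq (j+1+m+1) (j+1)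
      rw [show j+1+m+1+1 = j+1+m+2 from by omega, show j+1+m+2 - (j+1) = m+2 from by omega] at N2
      have hA2 : (((j+1+m+2).choose (j+1) : ℚ)) = ((j+1+m+1).choose (j+1) : ℚ) * ((j:ℚ)+m+3) / ((m:ℚ)+2) := by
        rw [eq_div_iff h2]; have C2 := congrArg (Nat.cast (R := ℚ)) N2; push_cast at C2; linear_combination -C2
      have N5 := Nat.choose_succ_right_eq (j+1+m+1) j
      rw [show j+1+m+1 - j = m+2 from by omega] at N5
      have hAj : (((j+1+m+1).choose j : ℚ)) = ((j+1+m+1).choose (j+1) : ℚ) * ((j:ℚ)+1) / ((m:ℚ)+2) := by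
        rw [eq_div_iff h2]; have C5 := congrArg (Nat.cast (R := ℚ)) N5; push_cast at C5; linear_combination -C5
      have N6 := Nat.choose_succ_right_eq (j+1+m+1+j) j
      rw [show j+1+m+1+j = j+1+m+(j+1) from by omega, show j+1+m+(j+1) - j = j+m+2 from by omega] at N6
      have hBj : (((j+1+m+1+j).choose j : ℚ)) = ((j+1+m+(j+1)).choose (j+1) : ℚ) * ((j:ℚ)+1) / ((j:ℚ)+m+2) := by
        rw [show j+1+m+1+j = j+1+m+(j+1) from by omega, eq_div_iff h1]
        have C6 := congrArg (Nat.cast (R := ℚ)) N6; push_cast at C6; linear_combination -C6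
      have N4 := Nat.choose_mul_succ_eq (j+1+m+1+(j+1)) (j+1)
      rw [show j+1+m+1+(j+1)+1 = j+1+m+2+(j+1) from by omega,
          show j+1+m+2+(j+1) - (j+1) = j+m+3 from by omega] at N4
      have hB2 : (((j+1+m+2+(j+1)).choose (j+1) : ℚ)) = ((j+1+m+1+(j+1)).choose (j+1) : ℚ) * (2*(j:ℚ)+m+4) / ((j:ℚ)+m+3) := by
        rw [eq_div_iff h4]; have C4 := congrArg (Nat.cast (R := ℚ)) N4; push_cast at C4; linear_combination -C4
      have N3 := Nat.choose_mul_succ_eq (j+1+m+(j+1)) (j+1)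
      rw [show j+1+m+(j+1)+1 = j+1+m+1+(j+1) from by omega,
          show j+1+m+1+(j+1) - (j+1) = j+m+2 from by omega] at N3
      have hB0 : (((j+1+m+(j+1)).choose (j+1) : ℚ)) = ((j+1+m+1+(j+1)).choose (j+1) : ℚ) * ((j:ℚ)+m+2) / (2*(j:ℚ)+m+3) := by
        rw [eq_div_iff h3]; have C3 := congrArg (Nat.cast (R := ℚ)) N3; push_cast at C3; linear_combination C3
      simp only [FF, GG, QQ]
      rw [hA0, hA2, hAj, hBj, hB2, hB0]
      push_cast
      field_simp
      ring
  · obtain rfl | rfl | h3 : k = n+1 ∨ k = n+2 ∨ n+3 ≤ k := by omega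
    · have z0 : (n.choose (n+1)) = 0 := Nat.choose_eq_zero_of_lt (by omega)
      have hsym : (n+1+n).choose (n+1) = (n+1+n).choose n := by
        rw [← Nat.choose_symm (by omega)]
        congr 1
        omega
      simp only [FF, GG, QQ, z0, Nat.choose_self, Nat.choose_succ_self_right]
      have h2 : ((n:ℚ)+2) ≠ 0 := by positivity
      have h22 : (2*(n:ℚ)+2) ≠ 0 := by positivity
      have P1 := Nat.choose_mul_succ_eq (n+1+(n+1)) (n+1)
      rw [show n+1+(n+1)+1 - (n+1) = n+2 from by omega,
          show n+1+(n+1)+1 = n+2+(n+1) from by omega] at P1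
      have hv : (((n+2+(n+1)).choose (n+1) : ℕ) : ℚ)
          = ((n+1+(n+1)).choose (n+1) : ℚ) * (2*(n:ℚ)+3) / ((n:ℚ)+2) := by
        rw [eq_div_iff h2]
        have C1 := congrArg (Nat.cast (R := ℚ)) P1; push_cast at C1; linear_combination -C1
      have P2 := Nat.choose_mul_succ_eq (n+1+n) (n+1)
      rw [show n+1+n+1 - (n+1) = n+1 from by omega, hsym,
          show n+1+n+1 = n+1+(n+1) from by omega] at P2
      have hu : (((n+1+n).choose n : ℕ) : ℚ)
          = ((n+1+(n+1)).choose (n+1) : ℚ) * ((n:ℚ)+1) / (2*(n:ℚ)+2) := by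
        rw [eq_div_iff h22]
        have C2 := congrArg (Nat.cast (R := ℚ)) P2; push_cast at C2; linear_combination C2
      rw [hv, hu]
      push_cast
      field_simp
      ring
    · have z0 : (n.choose (n+2)) = 0 := Nat.choose_eq_zero_of_lt (by omega)
      have z1 : ((n+1).choose (n+2)) = 0 := Nat.choose_eq_zero_of_lt (by omega)
      simp only [FF, GG, QQ, z0, z1, Nat.choose_self]
      have h2 : ((n:ℚ)+2) ≠ 0 := by positivity
      have T1 := Nat.choose_mul_succ_eq (n+1+(n+1)+1) (n+2)
      rw [show n+1+(n+1)+1+1 - (n+2) = n+2 from by omega,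
          show n+1+(n+1)+1+1 = n+2+(n+2) from by omega] at T1
      have hsym : (n+1+(n+1)+1).choose (n+2) = (n+1+(n+1)+1).choose (n+1) := by
        rw [← Nat.choose_symm (show n+2 ≤ n+1+(n+1)+1 by omega)]
        congr 1
        omega
      rw [hsym] at T1
      have T3 := Nat.choose_mul_succ_eq (n+1+(n+1)) (n+1)
      rw [show n+1+(n+1)+1 - (n+1) = n+2 from by omega] at T3
      have hr : (((n+2+(n+2)).choose (n+2) : ℕ) : ℚ)
          = ((n+1+(n+1)).choose (n+1) : ℚ) * (2*(n:ℚ)+3) * (2*(n:ℚ)+4) / (((n:ℚ)+2)*((n:ℚ)+2)) := by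
        rw [eq_div_iff (by positivity)]
        have C1 := congrArg (Nat.cast (R := ℚ)) T1; push_cast at C1
        have C3 := congrArg (Nat.cast (R := ℚ)) T3; push_cast at C3
        linear_combination (-((n:ℚ)+2))*C1 - (2*(n:ℚ)+4)*C3
      rw [hr]
      push_cast
      field_simp
      ring
    · obtain ⟨j, rfl⟩ : ∃ j, k = j+1 := ⟨k-1, by omega⟩
      have z0 : (n.choose (j+1)) = 0 := Nat.choose_eq_zero_of_lt (by omega)
      have z1 : ((n+1).choose (j+1)) = 0 := Nat.choose_eq_zero_of_lt (by omega)
      have z2 : ((n+2).choose (j+1)) = 0 := Nat.choose_eq_zero_of_lt (by omega)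
      have z3 : ((n+1).choose j) = 0 := Nat.choose_eq_zero_of_lt (by omega)
      simp [FF, GG, QQ, z0, z1, z2, z3]

theorem apery_rec (n : ℕ) :
    ((n:ℚ)+2)^3 * apery (n+2)
      = (34*((n:ℚ)+1)^3 + 51*((n:ℚ)+1)^2 + 27*((n:ℚ)+1) + 5) * apery (n+1)
        - ((n:ℚ)+1)^3 * apery n := by
  have H : ∑ k ∈ Finset.range (n+3),
      (((n:ℚ)+2)^3 * FF (n+2) k
        - (34*((n:ℚ)+1)^3 + 51*((n:ℚ)+1)^2 + 27*((n:ℚ)+1) + 5) * FF (n+1) k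
        + ((n:ℚ)+1)^3 * FF n k)
      = GG (n+1) (n+3) - GG (n+1) 0 := by
    rw [← Finset.sum_range_sub (GG (n+1)) (n+3)]
    exact Finset.sum_congr rfl fun k _ => keyid n k
  have hGtop : GG (n+1) (n+3) = 0 := by
    have : ((n+1).choose (n+2)) = 0 := Nat.choose_eq_zero_of_lt (by omega)
    rw [show n+3 = (n+2)+1 from by omega]
    simp [GG, this]
  have hG0 : GG (n+1) 0 = 0 := rfl
  rw [Finset.sum_add_distrib, Finset.sum_sub_distrib, ← Finset.mul_sum, ← Finset.mul_sum,
      ← Finset.mul_sum, hGtop, hG0] at H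
  have s2 : ∑ k ∈ Finset.range (n+3), FF (n+2) k = apery (n+2) := by
    rw [apery, show n+2+1 = n+3 from by omega]
    rfl
  have s1 : ∑ k ∈ Finset.range (n+3), FF (n+1) k = apery (n+1) := by
    rw [show n+3 = (n+2)+1 from by omega, Finset.sum_range_succ]
    have : ((n+1).choose (n+2)) = 0 := Nat.choose_eq_zero_of_lt (by omega)
    rw [apery, show n+1+1 = n+2 from by omega]
    simp [FF, this]
  have s0 : ∑ k ∈ Finset.range (n+3), FF n k = apery n := by
    rw [show n+3 = (n+2)+1 from by omega, Finset.sum_range_succ,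
        show n+2 = (n+1)+1 from by omega, Finset.sum_range_succ]
    have h1 : (n.choose (n+1)) = 0 := Nat.choose_eq_zero_of_lt (by omega)
    have h2 : (n.choose (n+2)) = 0 := Nat.choose_eq_zero_of_lt (by omega)
    rw [apery]
    simp [FF, h1, h2]
  rw [s2, s1, s0] at H
  linarith

lemma coeff_aperyGF (n : ℕ) : coeff n aperyGF = apery n := coeff_mk n apery

lemma cXp (p : ℚ⟦X⟧) (d N : ℕ) : coeff N (p * X^d) = if d ≤ N then coeff (N-d) p else 0 :=
  coeff_mul_X_pow' p d N

lemma caconst : constantCoeff aperyGF = apery 0 := by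
  rw [← coeff_zero_eq_constantCoeff]; exact coeff_mk 0 apery
lemma a0 : apery 0 = 1 := by norm_num [apery]
lemma a1 : apery 1 = 5 := by norm_num [apery, Finset.sum_range_succ, Nat.choose]
lemma a2 : apery 2 = 73 := by norm_num [apery, Finset.sum_range_succ, Nat.choose]
lemma a3 : apery 3 = 1445 := by norm_num [apery, Finset.sum_range_succ, Nat.choose]
lemma a4 : apery 4 = 33001 := by norm_num [apery, Finset.sum_range_succ, Nat.choose]

/-- The generating series of the Apéry numbers is annihilated by the Apéry differential
operator: Apéry's recurrence, in ODE form. -/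
theorem apery_ode :
    X ^ 2 * (1 - 34 * X + X ^ 2) * (d⁄dX ℚ (d⁄dX ℚ (d⁄dX ℚ aperyGF)))
      + X * (3 - 153 * X + 6 * X ^ 2) * (d⁄dX ℚ (d⁄dX ℚ aperyGF))
      + (1 - 112 * X + 7 * X ^ 2) * (d⁄dX ℚ aperyGF)
      + (X - 5) * aperyGF = 0 := by
  have c34 : (34 : ℚ⟦X⟧) = C 34 := by simp [map_ofNat]
  have c3 : (3 : ℚ⟦X⟧) = C 3 := by simp [map_ofNat]
  have c153 : (153 : ℚ⟦X⟧) = C 153 := by simp [map_ofNat]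
  have c6 : (6 : ℚ⟦X⟧) = C 6 := by simp [map_ofNat]
  have c112 : (112 : ℚ⟦X⟧) = C 112 := by simp [map_ofNat]
  have c7 : (7 : ℚ⟦X⟧) = C 7 := by simp [map_ofNat]
  have c5 : (5 : ℚ⟦X⟧) = C 5 := by simp [map_ofNat]
  have hL : X ^ 2 * (1 - 34 * X + X ^ 2) * (d⁄dX ℚ (d⁄dX ℚ (d⁄dX ℚ aperyGF))) + X * (3 - 153 * X + 6 * X ^ 2) * (d⁄dX ℚ (d⁄dX ℚ aperyGF))
      + (1 - 112 * X + 7 * X ^ 2) * (d⁄dX ℚ aperyGF) + (X - 5) * aperyGF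
    = (d⁄dX ℚ (d⁄dX ℚ (d⁄dX ℚ aperyGF)) * X^2 - C 34 * (d⁄dX ℚ (d⁄dX ℚ (d⁄dX ℚ aperyGF)) * X^3) + d⁄dX ℚ (d⁄dX ℚ (d⁄dX ℚ aperyGF)) * X^4)
      + (C 3 * ((d⁄dX ℚ (d⁄dX ℚ aperyGF)) * X^1) - C 153 * ((d⁄dX ℚ (d⁄dX ℚ aperyGF)) * X^2) + C 6 * ((d⁄dX ℚ (d⁄dX ℚ aperyGF)) * X^3))
      + ((d⁄dX ℚ aperyGF) - C 112 * ((d⁄dX ℚ aperyGF) * X^1) + C 7 * ((d⁄dX ℚ aperyGF) * X^2))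
      + (aperyGF * X^1 - C 5 * aperyGF) := by
    rw [← c34, ← c3, ← c153, ← c6, ← c112, ← c7, ← c5]; ring
  rw [hL]
  ext N
  simp only [map_add, map_sub, coeff_C_mul, cXp, map_zero, coeff_derivative,
    coeff_aperyGF, caconst]
  obtain _|_|_|_|M := N
  · norm_num [coeff_aperyGF, a0, a1]
  · norm_num [coeff_aperyGF, a0, a1, a2]
  · norm_num [coeff_aperyGF, a1, a2, a3]
  · norm_num [coeff_aperyGF, a2, a3, a4]
  · have h1 : 1 ≤ M+4 := by omega
    have h2 : 2 ≤ M+4 := by omega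
    have h3 : 3 ≤ M+4 := by omega
    have h4 : 4 ≤ M+4 := by omega
    simp only [if_pos h1, if_pos h2, if_pos h3, if_pos h4,
      show M+4-1 = M+3 from by omega, show M+4-2 = M+2 from by omega,
      show M+4-3 = M+1 from by omega, show M+4-4 = M from by omega, coeff_aperyGF]
    have R := apery_rec (M+3)
    push_cast at R ⊢
    simp +arith +decide
    linear_combination R
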